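/- Let f : ℕ → ℂ be an arithmetical function with f(1) ≠ 0, and let h denote the Dirichlet inverse of the function n ↦ f(n)/ξ(n). Then the function g(n) = ξ(n)·h(n) is the binomial inverse of f, i.e., (f ∘ g)(n) = δ(n) for all positive integers n. -/

import Mathlib

/-- `ξ(n) = ∏_p ν_p(n)!`. -/
def xi (n : ℕ) : ℕ := ∏ p ∈ n.primeFactors, Nat.factorial (n.factorization p)

/-- `∏_p C(ν_p(n), ν_p(d))`. -/
def binomCoeff (n d : ℕ) : ℕ :=
  ∏ p ∈ n.primeFactors, Nat.choose (n.factorization p) (d.factorization p)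

/-- The binomial convolution. -/
noncomputable def bconv (f g : ℕ → ℂ) (n : ℕ) : ℂ :=
  ∑ d ∈ n.divisors, (binomCoeff n d : ℂ) * f d * g (n / d)

/-- The Dirichlet convolution. -/
noncomputable def dconv (f g : ℕ → ℂ) (n : ℕ) : ℂ :=
  ∑ d ∈ n.divisors, f d * g (n / d)

/-- `δ(1) = 1`, `δ(n) = 0` for `n > 1`. -/
def delta (n : ℕ) : ℂ := if n = 1 then 1 else 0

lemma xi_eq_prod (n : ℕ) (s : Finset ℕ) (hs : n.primeFactors ⊆ s) :
    xi n = ∏ p ∈ s, Nat.factorial (n.factorization p) := by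
  refine Finset.prod_subset hs ?_
  intro p hp hnp
  have : n.factorization p = 0 := by
    by_contra hne
    exact hnp (Nat.support_factorization n ▸ Finsupp.mem_support_iff.mpr hne)
  simp [this]

lemma xi_pos (n : ℕ) : 0 < xi n :=
  Finset.prod_pos fun p _ => Nat.factorial_pos _

lemma key (n d : ℕ) (hn : n ≠ 0) (hd : d ∣ n) :
    binomCoeff n d * (xi d * xi (n / d)) = xi n := by
  have hd0 : d ≠ 0 := fun h => hn (by simpa [h] using hd)
  have hnd0 : n / d ≠ 0 := Nat.div_ne_zero_iff_of_dvd hd |>.mpr ⟨hn, hd0⟩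
  rw [xi_eq_prod d n.primeFactors (Nat.primeFactors_mono hd hn),
      xi_eq_prod (n / d) n.primeFactors (Nat.primeFactors_mono (Nat.div_dvd_of_dvd hd) hn),
      binomCoeff, ← Finset.prod_mul_distrib, ← Finset.prod_mul_distrib, xi]
  refine Finset.prod_congr rfl ?_
  intro p hp
  have hle : d.factorization p ≤ n.factorization p :=
    (Nat.factorization_le_iff_dvd hd0 hn).mpr hd p
  rw [Nat.factorization_div hd]
  simp only [Finsupp.coe_tsub, Pi.sub_apply]
  rw [← mul_assoc]
  exact Nat.choose_mul_factorial_mul_factorial hle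

/-- If `f(1) ≠ 0` and `h` is the Dirichlet inverse of `n ↦ f(n)/ξ(n)`, then
`g = ξ·h` is the binomial inverse of `f`, i.e. `(f ∘ g)(n) = δ(n)` for all `n ≥ 1`. -/
theorem bconv_inverse_eq_xi_mul_dirichlet_inverse (f h : ℕ → ℂ) (hf : f 1 ≠ 0)
    (hinv : ∀ n : ℕ, 0 < n → dconv (fun m => f m / (xi m : ℂ)) h n = delta n) :
    ∀ n : ℕ, 0 < n → bconv f (fun m => (xi m : ℂ) * h m) n = delta n := by
  intro n hn
  have hxi1 : xi 1 = 1 := by simp [xi]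
  have hcalc : bconv f (fun m => (xi m : ℂ) * h m) n
      = (xi n : ℂ) * dconv (fun m => f m / (xi m : ℂ)) h n := by
    rw [bconv, dconv, Finset.mul_sum]
    refine Finset.sum_congr rfl ?_
    intro d hd
    rw [Nat.mem_divisors] at hd
    have hxid : (xi d : ℂ) ≠ 0 := Nat.cast_ne_zero.mpr (xi_pos d).ne'
    have hk := key n d hd.2 hd.1
    have : (xi n : ℂ) = (binomCoeff n d : ℂ) * ((xi d : ℂ) * (xi (n / d) : ℂ)) := by
      exact_mod_cast hk.symm
    rw [this]
    field_simp
  rw [hcalc, hinv n hn, delta]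
  split
  · next h1 => simp [h1, hxi1]
  · simp
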